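/- Dependent rounding preserves marginals and degrees (statement of Gandhi–Khuller–Parthasarathy–Srinivasan for the bipartite case): for every bipartite graph G = (V, E) with edge weights w_e ∈ [0,1], there exists a probability distribution over subsets F ⊆ E such that (i) for every edge e, Pr[e ∈ F] = w_e, and (ii) for every vertex v and every F in the support, the degree of v in F is either ⌊Σ_{e ∋ v} w_e⌋ or ⌈Σ_{e ∋ v} w_e⌉. -/

import Mathlib

/-- `R i c` is the rank (0 = top) that voter `i` assigns to candidate `c`. -/
abbrev Profile (n m : ℕ) := Fin n → Fin m → Fin m

/-- `N'` forms a solid coalition over `C'`: every voter in `N'` ranks every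
candidate of `C'` above every candidate outside `C'`. -/
def SolidCoalition {n m : ℕ} (R : Profile n m)
    (N' : Finset (Fin n)) (C' : Finset (Fin m)) : Prop :=
  ∀ i ∈ N', ∀ c ∈ C', ∀ c' ∉ C', (R i c : ℕ) < (R i c' : ℕ)

/-- A committee `W` satisfies proportionality for solid coalitions. -/
def SatisfiesPSC {n m : ℕ} (k : ℕ) (R : Profile n m) (W : Finset (Fin m)) : Prop :=
  ¬ ∃ (N' : Finset (Fin n)) (C' : Finset (Fin m)) (ℓ : ℕ),
      1 ≤ ℓ ∧ ℓ ≤ k ∧ SolidCoalition R N' C' ∧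
      (ℓ : ℚ) * n / k ≤ (N'.card : ℚ) ∧
      (W ∩ C').card < min C'.card ℓ

/-- `R'` is obtained from `R` by shifting candidate `c` one rank up in
voter `i`'s list, i.e. swapping `c` with its immediate predecessor `d`. -/
def ShiftUp {n m : ℕ} (R R' : Profile n m) (i : Fin n) (c : Fin m) : Prop :=
  (∀ j, j ≠ i → R' j = R j) ∧
  ∃ d : Fin m, (R i d : ℕ) + 1 = (R i c : ℕ) ∧
    R' i c = R i d ∧ R' i d = R i c ∧
    ∀ e, e ≠ c → e ≠ d → R' i e = R i e


open Finset

namespace DepRound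

variable {L Rv : Type*} [Fintype L] [Fintype Rv] [DecidableEq L] [DecidableEq Rv]

/-- x is an integer -/
def isInt (x : ℝ) : Prop := ∃ n : ℤ, x = n

open Classical in
noncomputable def fracE (E : Finset (L × Rv)) (w : L × Rv → ℝ) : Finset (L × Rv) :=
  E.filter (fun e => w e ≠ 0 ∧ w e ≠ 1)

noncomputable def degL (E : Finset (L × Rv)) (w : L × Rv → ℝ) (v : L) : ℝ :=
  ∑ e ∈ E.filter (fun e => e.1 = v), w e

noncomputable def degR (E : Finset (L × Rv)) (w : L × Rv → ℝ) (u : Rv) : ℝ :=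
  ∑ e ∈ E.filter (fun e => e.2 = u), w e

open Classical in
noncomputable def freeL (E : Finset (L × Rv)) (w : L × Rv → ℝ) : Finset L :=
  univ.filter (fun v => ¬ isInt (degL E w v))

open Classical in
noncomputable def freeR (E : Finset (L × Rv)) (w : L × Rv → ℝ) : Finset Rv :=
  univ.filter (fun u => ¬ isInt (degR E w u))

noncomputable def Phi (E : Finset (L × Rv)) (w : L × Rv → ℝ) : ℕ :=
  (fracE E w).card + (freeL E w).card + (freeR E w).card

lemma sum01 {α : Type*} (s : Finset α) (f : α → ℝ) (h : ∀ a ∈ s, f a = 0 ∨ f a = 1)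
    [DecidablePred (fun a => f a = 1)] :
    ∑ a ∈ s, f a = ((s.filter (fun a => f a = 1)).card : ℝ) := by
  rw [Finset.card_filter]
  push_cast
  refine Finset.sum_congr rfl fun a ha => ?_
  rcases h a ha with h' | h' <;> simp [h']

lemma transfer {d d' : ℝ} (h1 : (⌊d⌋ : ℝ) ≤ d') (h2 : d' ≤ (⌈d⌉ : ℝ)) (k : ℤ)
    (hk : k = ⌊d'⌋ ∨ k = ⌈d'⌉) : k = ⌊d⌋ ∨ k = ⌈d⌉ := by
  have a1 : ⌊d⌋ ≤ ⌊d'⌋ := Int.le_floor.mpr h1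
  have a2 : ⌊d'⌋ ≤ ⌈d⌉ := by exact_mod_cast (Int.floor_le d').trans h2
  have a3 : ⌊d⌋ ≤ ⌈d'⌉ := by exact_mod_cast h1.trans (Int.le_ceil d')
  have a4 : ⌈d'⌉ ≤ ⌈d⌉ := Int.ceil_le.mpr h2
  have a5 : ⌈d⌉ ≤ ⌊d⌋ + 1 := Int.ceil_le_floor_add_one d
  omega

def incM (S : Finset (L × Rv)) (VL : Finset L) (VR : Finset Rv) :
    Matrix (↥VL ⊕ ↥VR) (↥S) ℝ := fun k e =>
  match k with
  | Sum.inl v => if (e : L × Rv).1 = (v : L) then (1:ℝ) else 0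
  | Sum.inr u => if (e : L × Rv).2 = (u : Rv) then (-1:ℝ) else 0

lemma incM_inl (S : Finset (L × Rv)) (VL : Finset L) (VR : Finset Rv) (v : ↥VL) (e : ↥S) :
    incM S VL VR (Sum.inl v) e = if (e : L × Rv).1 = (v : L) then (1:ℝ) else 0 := rfl

lemma incM_inr (S : Finset (L × Rv)) (VL : Finset L) (VR : Finset Rv) (u : ↥VR) (e : ↥S) :
    incM S VL VR (Sum.inr u) e = if (e : L × Rv).2 = (u : Rv) then (-1:ℝ) else 0 := rfl

noncomputable def sumAll (K : Type*) [Fintype K] : (K → ℝ) →ₗ[ℝ] ℝ := ∑ k, LinearMap.proj k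

lemma sumAll_apply {K : Type*} [Fintype K] (y : K → ℝ) : sumAll K y = ∑ k, y k := by
  simp [sumAll]

lemma sumAll_surj {K : Type*} [Fintype K] [Nonempty K] :
    Function.Surjective (sumAll K) := by
  intro c
  refine ⟨fun _ => c / (Fintype.card K), ?_⟩
  rw [sumAll_apply, Finset.sum_const, Finset.card_univ, nsmul_eq_mul]
  have h : (Fintype.card K : ℝ) ≠ 0 := by
    exact_mod_cast Fintype.card_ne_zero
  field_simp

lemma kernel_core (S : Finset (L × Rv)) (VL : Finset L) (VR : Finset Rv)
    (hSne : S.Nonempty)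
    (hcountL : 2 * VL.card ≤ (S.filter (fun e => e.1 ∈ VL)).card)
    (hcountR : 2 * VR.card ≤ (S.filter (fun e => e.2 ∈ VR)).card) :
    ∃ χ₀ : (↥S → ℝ), χ₀ ≠ 0 ∧ (incM S VL VR).mulVecLin χ₀ = 0 := by
  classical
  by_contra hcon
  push_neg at hcon
  have hinj : Function.Injective (incM S VL VR).mulVecLin := by
    rw [← LinearMap.ker_eq_bot, Submodule.eq_bot_iff]
    intro x hx
    by_contra hx0
    exact hcon x hx0 (LinearMap.mem_ker.mp hx)
  have hle := LinearMap.finrank_le_finrank_of_injective hinj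
  rw [Module.finrank_pi, Module.finrank_pi] at hle
  rw [Fintype.card_coe, Fintype.card_sum, Fintype.card_coe, Fintype.card_coe] at hle
  by_cases hall : ∀ e ∈ S, e.1 ∈ VL ∧ e.2 ∈ VR
  · obtain ⟨e1, he1S⟩ := hSne
    have hKne : Nonempty (↥VL ⊕ ↥VR) := ⟨Sum.inl ⟨e1.1, (hall e1 he1S).1⟩⟩
    have hsurj : Function.Surjective (sumAll (↥VL ⊕ ↥VR)) := sumAll_surj
    have hrange : LinearMap.range (incM S VL VR).mulVecLin ≤
        LinearMap.ker (sumAll (↥VL ⊕ ↥VR)) := by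
      rintro y ⟨x, rfl⟩
      rw [LinearMap.mem_ker, sumAll_apply]
      have hexp : ∀ k, (incM S VL VR).mulVecLin x k = ∑ e : ↥S, incM S VL VR k e * x e := by
        intro k
        simp [Matrix.mulVecLin_apply, Matrix.mulVec, dotProduct]
      calc ∑ k, (incM S VL VR).mulVecLin x k
          = ∑ k, ∑ e : ↥S, incM S VL VR k e * x e :=
            Finset.sum_congr rfl (fun k _ => hexp k)
        _ = ∑ e : ↥S, (∑ k, incM S VL VR k e) * x e := by
            rw [Finset.sum_comm]
            exact Finset.sum_congr rfl (fun e _ => by rw [Finset.sum_mul])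
        _ = 0 := by
            apply Finset.sum_eq_zero
            intro e _
            have hcolsum : ∑ k, incM S VL VR k e = 0 := by
              rw [Fintype.sum_sum_type]
              have hA : ∑ v : ↥VL, incM S VL VR (Sum.inl v) e = 1 := by
                simp only [incM_inl]
                rw [Finset.sum_coe_sort VL (fun v => if (e : L × Rv).1 = v then (1:ℝ) else 0)]
                rw [Finset.sum_ite_eq]
                simp [(hall e e.prop).1]
              have hB : ∑ u : ↥VR, incM S VL VR (Sum.inr u) e = -1 := by
                simp only [incM_inr]
                rw [Finset.sum_coe_sort VR (fun u => if (e : L × Rv).2 = u then (-1:ℝ) else 0)]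
                rw [Finset.sum_ite_eq]
                simp [(hall e e.prop).2]
              rw [hA, hB]
              ring
            rw [hcolsum, zero_mul]
    have hr1 : Module.finrank ℝ (↥S → ℝ) =
        Module.finrank ℝ (LinearMap.range (incM S VL VR).mulVecLin) :=
      (LinearMap.finrank_range_of_inj hinj).symm
    have hr2 : Module.finrank ℝ (LinearMap.range (incM S VL VR).mulVecLin) ≤
        Module.finrank ℝ (LinearMap.ker (sumAll (↥VL ⊕ ↥VR))) := Submodule.finrank_mono hrange
    have hr3 := LinearMap.finrank_range_add_finrank_ker (sumAll (↥VL ⊕ ↥VR))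
    have hr4 : LinearMap.range (sumAll (↥VL ⊕ ↥VR)) = ⊤ := LinearMap.range_eq_top.mpr hsurj
    rw [hr4, finrank_top, Module.finrank_self, Module.finrank_pi] at hr3
    have hScard : Module.finrank ℝ (↥S → ℝ) = S.card := by
      rw [Module.finrank_pi, Fintype.card_coe]
    have hKcard : Fintype.card (↥VL ⊕ ↥VR) = VL.card + VR.card := by
      rw [Fintype.card_sum, Fintype.card_coe, Fintype.card_coe]
    have hSpos : 1 ≤ S.card := card_pos.mpr ⟨e1, he1S⟩
    rw [hScard] at hr1
    rw [hKcard] at hr3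
    have h2a : (S.filter (fun e => e.1 ∈ VL)).card ≤ S.card :=
      Finset.card_le_card (filter_subset _ _)
    have h2b : (S.filter (fun e => e.2 ∈ VR)).card ≤ S.card :=
      Finset.card_le_card (filter_subset _ _)
    omega
  · push_neg at hall
    obtain ⟨e0, he0S, he0⟩ := hall
    have hSpos : 1 ≤ S.card := card_pos.mpr ⟨e0, he0S⟩
    have he0'' : e0.1 ∉ VL ∨ e0.2 ∉ VR := by
      by_cases h : e0.1 ∈ VL
      · exact Or.inr (he0 h)
      · exact Or.inl h
    rcases he0'' with he0' | he0'
    · have hsubs : S.filter (fun e => e.1 ∈ VL) ⊆ S.erase e0 := by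
        intro e he
        obtain ⟨heS, hein⟩ := mem_filter.mp he
        refine mem_erase.mpr ⟨?_, heS⟩
        rintro rfl
        exact he0' hein
      have h1 : (S.filter (fun e => e.1 ∈ VL)).card ≤ S.card - 1 := by
        have := Finset.card_le_card hsubs
        rwa [Finset.card_erase_of_mem he0S] at this
      have h2 : (S.filter (fun e => e.2 ∈ VR)).card ≤ S.card :=
        Finset.card_le_card (filter_subset _ _)
      omega
    · have hsubs : S.filter (fun e => e.2 ∈ VR) ⊆ S.erase e0 := by
        intro e he
        obtain ⟨heS, hein⟩ := mem_filter.mp he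
        refine mem_erase.mpr ⟨?_, heS⟩
        rintro rfl
        exact he0' hein
      have h1 : (S.filter (fun e => e.2 ∈ VR)).card ≤ S.card - 1 := by
        have := Finset.card_le_card hsubs
        rwa [Finset.card_erase_of_mem he0S] at this
      have h2 : (S.filter (fun e => e.1 ∈ VL)).card ≤ S.card :=
        Finset.card_le_card (filter_subset _ _)
      omega

lemma kernel_coords (S : Finset (L × Rv)) (VL : Finset L) (VR : Finset Rv)
    (χ₀ : ↥S → ℝ) (hker : (incM S VL VR).mulVecLin χ₀ = 0) :
    (∀ v ∈ VL, ∑ e ∈ S.filter (fun e => e.1 = v),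
      (if h : e ∈ S then χ₀ ⟨e, h⟩ else 0) = 0) ∧
    (∀ u ∈ VR, ∑ e ∈ S.filter (fun e => e.2 = u),
      (if h : e ∈ S then χ₀ ⟨e, h⟩ else 0) = 0) := by
  classical
  constructor
  · intro v hv
    have hcoord := congrFun hker (Sum.inl ⟨v, hv⟩)
    have hexp : (incM S VL VR).mulVecLin χ₀ (Sum.inl ⟨v, hv⟩) =
        ∑ e : ↥S, incM S VL VR (Sum.inl ⟨v, hv⟩) e * χ₀ e := by
      simp [Matrix.mulVecLin_apply, Matrix.mulVec, dotProduct]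
    rw [hexp] at hcoord
    have heq2 : ∑ e : ↥S, incM S VL VR (Sum.inl ⟨v, hv⟩) e * χ₀ e =
        ∑ e ∈ S.filter (fun e => e.1 = v), (if h : e ∈ S then χ₀ ⟨e, h⟩ else 0) := by
      rw [Finset.sum_filter, ← Finset.sum_coe_sort S]
      refine Finset.sum_congr rfl ?_
      intro e _
      rw [incM_inl]
      by_cases hc : (e : L × Rv).1 = v
      · rw [if_pos hc, if_pos hc, one_mul, dif_pos e.prop]
      · rw [if_neg hc, if_neg hc, zero_mul]
    rw [heq2] at hcoord
    simpa using hcoord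
  · intro u hu
    have hcoord := congrFun hker (Sum.inr ⟨u, hu⟩)
    have hexp : (incM S VL VR).mulVecLin χ₀ (Sum.inr ⟨u, hu⟩) =
        ∑ e : ↥S, incM S VL VR (Sum.inr ⟨u, hu⟩) e * χ₀ e := by
      simp [Matrix.mulVecLin_apply, Matrix.mulVec, dotProduct]
    rw [hexp] at hcoord
    have heq2 : ∑ e : ↥S, incM S VL VR (Sum.inr ⟨u, hu⟩) e * χ₀ e =
        -∑ e ∈ S.filter (fun e => e.2 = u), (if h : e ∈ S then χ₀ ⟨e, h⟩ else 0) := by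
      rw [Finset.sum_filter, ← Finset.sum_coe_sort S, ← Finset.sum_neg_distrib]
      refine Finset.sum_congr rfl ?_
      intro e _
      rw [incM_inr]
      by_cases hc : (e : L × Rv).2 = u
      · rw [if_pos hc, if_pos hc, dif_pos e.prop]
        ring
      · rw [if_neg hc, if_neg hc, zero_mul, neg_zero]
    rw [heq2] at hcoord
    exact neg_eq_zero.mp (by simpa using hcoord)

lemma exists_kernel (E : Finset (L × Rv)) (w : L × Rv → ℝ)
    (hw : ∀ e ∈ E, 0 ≤ w e ∧ w e ≤ 1) (hne : (fracE E w).Nonempty) :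
    ∃ χ : L × Rv → ℝ, (∃ e, χ e ≠ 0) ∧ (∀ e, χ e ≠ 0 → e ∈ fracE E w) ∧
      (∀ v : L, isInt (degL E w v) → ∑ e ∈ E.filter (fun e => e.1 = v), χ e = 0) ∧
      (∀ u : Rv, isInt (degR E w u) → ∑ e ∈ E.filter (fun e => e.2 = u), χ e = 0) := by
  classical
  set S := fracE E w with hS
  have hSsub : S ⊆ E := filter_subset _ _
  have hwfrac : ∀ e ∈ S, 0 < w e ∧ w e < 1 := by
    intro e he
    rw [hS] at he
    simp only [fracE, mem_filter] at he
    obtain ⟨heE, h0, h1⟩ := he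
    exact ⟨lt_of_le_of_ne (hw e heE).1 (Ne.symm h0), lt_of_le_of_ne (hw e heE).2 h1⟩
  -- every incident vertex with integer fractional degree has at least 2 fractional edges
  have hfracnotint : ∀ e ∈ S, ∀ kk : ℤ, ∀ m : ℕ, w e ≠ (kk : ℝ) - m := by
    intro e he kk m hcon
    obtain ⟨h0, h1⟩ := hwfrac e he
    rw [hcon] at h0 h1
    have hh0 : (0:ℤ) < kk - m := by exact_mod_cast (by push_cast; linarith : (0:ℝ) < (kk:ℝ) - m)
    have hh1 : kk - (m:ℤ) < 1 := by exact_mod_cast (by push_cast; linarith : ((kk:ℝ) - m) < 1)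
    omega
  have htwoL : ∀ v : L, (∃ e ∈ S, e.1 = v) → isInt (degL E w v) →
      2 ≤ (S.filter (fun e => e.1 = v)).card := by
    rintro v ⟨e0, he0S, he0v⟩ hint
    by_contra hlt
    push_neg at hlt
    have hmem0 : e0 ∈ S.filter (fun e => e.1 = v) := mem_filter.mpr ⟨he0S, he0v⟩
    have h1 : 1 ≤ (S.filter (fun e => e.1 = v)).card := card_pos.mpr ⟨e0, hmem0⟩
    have hone : (S.filter (fun e => e.1 = v)).card = 1 := by omega
    obtain ⟨estar, hstar⟩ := card_eq_one.mp hone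
    have hstarS : estar ∈ S ∧ estar.1 = v := by
      have : estar ∈ S.filter (fun e => e.1 = v) := hstar ▸ mem_singleton_self _
      exact mem_filter.mp this
    have hstarmem : estar ∈ E.filter (fun e => e.1 = v) :=
      mem_filter.mpr ⟨hSsub hstarS.1, hstarS.2⟩
    have hothers : ∀ e ∈ (E.filter (fun e => e.1 = v)).erase estar, w e = 0 ∨ w e = 1 := by
      intro e he
      obtain ⟨hne, heE⟩ := mem_erase.mp he
      by_contra h
      push_neg at h
      have heS : e ∈ S := by
        rw [hS]
        simp only [fracE, mem_filter]
        exact ⟨(mem_filter.mp heE).1, h.1, h.2⟩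
      have : e ∈ S.filter (fun e => e.1 = v) :=
        mem_filter.mpr ⟨heS, (mem_filter.mp heE).2⟩
      rw [hstar, mem_singleton] at this
      exact hne this
    have hsplit : degL E w v = w estar + ∑ e ∈ (E.filter (fun e => e.1 = v)).erase estar, w e :=
      (Finset.add_sum_erase _ _ hstarmem).symm
    obtain ⟨kk, hkk⟩ := hint
    have hsum := sum01 _ _ hothers
    apply hfracnotint estar hstarS.1 kk
      (((E.filter (fun e => e.1 = v)).erase estar).filter (fun a => w a = 1)).card
    rw [← hsum]
    have : (kk : ℝ) = w estar + ∑ e ∈ (E.filter (fun e => e.1 = v)).erase estar, w e := by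
      rw [← hsplit, ← hkk]
    linarith
  have htwoR : ∀ u : Rv, (∃ e ∈ S, e.2 = u) → isInt (degR E w u) →
      2 ≤ (S.filter (fun e => e.2 = u)).card := by
    rintro u ⟨e0, he0S, he0u⟩ hint
    by_contra hlt
    push_neg at hlt
    have hmem0 : e0 ∈ S.filter (fun e => e.2 = u) := mem_filter.mpr ⟨he0S, he0u⟩
    have h1 : 1 ≤ (S.filter (fun e => e.2 = u)).card := card_pos.mpr ⟨e0, hmem0⟩
    have hone : (S.filter (fun e => e.2 = u)).card = 1 := by omega
    obtain ⟨estar, hstar⟩ := card_eq_one.mp hone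
    have hstarS : estar ∈ S ∧ estar.2 = u := by
      have : estar ∈ S.filter (fun e => e.2 = u) := hstar ▸ mem_singleton_self _
      exact mem_filter.mp this
    have hstarmem : estar ∈ E.filter (fun e => e.2 = u) :=
      mem_filter.mpr ⟨hSsub hstarS.1, hstarS.2⟩
    have hothers : ∀ e ∈ (E.filter (fun e => e.2 = u)).erase estar, w e = 0 ∨ w e = 1 := by
      intro e he
      obtain ⟨hne, heE⟩ := mem_erase.mp he
      by_contra h
      push_neg at h
      have heS : e ∈ S := by
        rw [hS]
        simp only [fracE, mem_filter]
        exact ⟨(mem_filter.mp heE).1, h.1, h.2⟩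
      have : e ∈ S.filter (fun e => e.2 = u) :=
        mem_filter.mpr ⟨heS, (mem_filter.mp heE).2⟩
      rw [hstar, mem_singleton] at this
      exact hne this
    have hsplit : degR E w u = w estar + ∑ e ∈ (E.filter (fun e => e.2 = u)).erase estar, w e :=
      (Finset.add_sum_erase _ _ hstarmem).symm
    obtain ⟨kk, hkk⟩ := hint
    have hsum := sum01 _ _ hothers
    apply hfracnotint estar hstarS.1 kk
      (((E.filter (fun e => e.2 = u)).erase estar).filter (fun a => w a = 1)).card
    rw [← hsum]
    have : (kk : ℝ) = w estar + ∑ e ∈ (E.filter (fun e => e.2 = u)).erase estar, w e := by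
      rw [← hsplit, ← hkk]
    linarith
  set VL : Finset L := univ.filter (fun v => (∃ e ∈ S, e.1 = v) ∧ isInt (degL E w v)) with hVL
  set VR : Finset Rv := univ.filter (fun u => (∃ e ∈ S, e.2 = u) ∧ isInt (degR E w u)) with hVR
  -- counting
  have hcountL : 2 * VL.card ≤ (S.filter (fun e => e.1 ∈ VL)).card := by
    have hfib : (S.filter (fun e => e.1 ∈ VL)).card =
        ∑ v ∈ VL, ((S.filter (fun e => e.1 ∈ VL)).filter (fun e => e.1 = v)).card :=
      card_eq_sum_card_fiberwise (fun x hx => (mem_filter.mp hx).2)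
    have hinner : ∀ v ∈ VL, (S.filter (fun e => e.1 ∈ VL)).filter (fun e => e.1 = v) =
        S.filter (fun e => e.1 = v) := by
      intro v hv
      ext e
      simp only [mem_filter, and_assoc]
      constructor
      · rintro ⟨h1, h2, h3⟩; exact ⟨h1, h3⟩
      · rintro ⟨h1, h3⟩; exact ⟨h1, h3 ▸ hv, h3⟩
    rw [hfib]
    calc 2 * VL.card = ∑ _v ∈ VL, 2 := by rw [Finset.sum_const]; ring
    _ ≤ ∑ v ∈ VL, ((S.filter (fun e => e.1 ∈ VL)).filter (fun e => e.1 = v)).card := by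
        apply Finset.sum_le_sum
        intro v hv
        rw [hinner v hv]
        obtain ⟨-, hvin, hvint⟩ := mem_filter.mp hv
        exact htwoL v hvin hvint
  have hcountR : 2 * VR.card ≤ (S.filter (fun e => e.2 ∈ VR)).card := by
    have hfib : (S.filter (fun e => e.2 ∈ VR)).card =
        ∑ u ∈ VR, ((S.filter (fun e => e.2 ∈ VR)).filter (fun e => e.2 = u)).card :=
      card_eq_sum_card_fiberwise (fun x hx => (mem_filter.mp hx).2)
    have hinner : ∀ u ∈ VR, (S.filter (fun e => e.2 ∈ VR)).filter (fun e => e.2 = u) =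
        S.filter (fun e => e.2 = u) := by
      intro u hu
      ext e
      simp only [mem_filter, and_assoc]
      constructor
      · rintro ⟨h1, h2, h3⟩; exact ⟨h1, h3⟩
      · rintro ⟨h1, h3⟩; exact ⟨h1, h3 ▸ hu, h3⟩
    rw [hfib]
    calc 2 * VR.card = ∑ _u ∈ VR, 2 := by rw [Finset.sum_const]; ring
    _ ≤ ∑ u ∈ VR, ((S.filter (fun e => e.2 ∈ VR)).filter (fun e => e.2 = u)).card := by
        apply Finset.sum_le_sum
        intro u hu
        rw [hinner u hu]
        obtain ⟨-, huin, huint⟩ := mem_filter.mp hu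
        exact htwoR u huin huint
  obtain ⟨χ₀, hχ0ne, hχ0ker⟩ := kernel_core S VL VR (by rw [hS]; exact hne) hcountL hcountR
  obtain ⟨hcL, hcR⟩ := kernel_coords S VL VR χ₀ hχ0ker
  refine ⟨fun e => if h : e ∈ S then χ₀ ⟨e, h⟩ else 0, ?_, ?_, ?_, ?_⟩
  · obtain ⟨es, hes⟩ := Function.ne_iff.mp hχ0ne
    refine ⟨(es : L × Rv), ?_⟩
    have h2 : (if h : (es : L × Rv) ∈ S then χ₀ ⟨(es : L × Rv), h⟩ else 0) = χ₀ es := by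
      rw [dif_pos es.prop, Subtype.coe_eta]
    intro hc
    exact hes (by rw [← h2]; exact hc)
  · intro e he
    by_contra h
    apply he
    show (if h : e ∈ S then χ₀ ⟨e, h⟩ else 0) = 0
    rw [dif_neg h]
  · intro v hint
    have hred : ∑ e ∈ E.filter (fun e => e.1 = v),
        (if h : e ∈ S then χ₀ ⟨e, h⟩ else 0) =
        ∑ e ∈ S.filter (fun e => e.1 = v), (if h : e ∈ S then χ₀ ⟨e, h⟩ else 0) := by
      refine (Finset.sum_subset (Finset.filter_subset_filter _ hSsub) ?_).symm
      intro x hx hnx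
      rw [dif_neg]
      intro hxS
      exact hnx (mem_filter.mpr ⟨hxS, (mem_filter.mp hx).2⟩)
    rw [hred]
    by_cases hv : ∃ e ∈ S, e.1 = v
    · exact hcL v (mem_filter.mpr ⟨mem_univ _, hv, hint⟩)
    · have hemp : S.filter (fun e => e.1 = v) = ∅ := by
        rw [Finset.filter_eq_empty_iff]
        intro e he hc
        exact hv ⟨e, he, hc⟩
      rw [hemp, Finset.sum_empty]
  · intro u hint
    have hred : ∑ e ∈ E.filter (fun e => e.2 = u),
        (if h : e ∈ S then χ₀ ⟨e, h⟩ else 0) =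
        ∑ e ∈ S.filter (fun e => e.2 = u), (if h : e ∈ S then χ₀ ⟨e, h⟩ else 0) := by
      refine (Finset.sum_subset (Finset.filter_subset_filter _ hSsub) ?_).symm
      intro x hx hnx
      rw [dif_neg]
      intro hxS
      exact hnx (mem_filter.mpr ⟨hxS, (mem_filter.mp hx).2⟩)
    rw [hred]
    by_cases hu : ∃ e ∈ S, e.2 = u
    · exact hcR u (mem_filter.mpr ⟨mem_univ _, hu, hint⟩)
    · have hemp : S.filter (fun e => e.2 = u) = ∅ := by
        rw [Finset.filter_eq_empty_iff]
        intro e he hc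
        exact hu ⟨e, he, hc⟩
      rw [hemp, Finset.sum_empty]

lemma step (E : Finset (L × Rv)) (w : L × Rv → ℝ)
    (hw : ∀ e ∈ E, 0 ≤ w e ∧ w e ≤ 1) (χ : L × Rv → ℝ)
    (hχ : ∃ e, χ e ≠ 0) (hsupp : ∀ e, χ e ≠ 0 → e ∈ fracE E w)
    (hL : ∀ v : L, isInt (degL E w v) → ∑ e ∈ E.filter (fun e => e.1 = v), χ e = 0)
    (hR : ∀ u : Rv, isInt (degR E w u) → ∑ e ∈ E.filter (fun e => e.2 = u), χ e = 0) :
    ∃ δ : ℝ, 0 < δ ∧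
      (∀ e ∈ E, 0 ≤ w e + δ * χ e ∧ w e + δ * χ e ≤ 1) ∧
      (∀ v : L, (⌊degL E w v⌋ : ℝ) ≤ degL E (fun e => w e + δ * χ e) v ∧
        degL E (fun e => w e + δ * χ e) v ≤ (⌈degL E w v⌉ : ℝ)) ∧
      (∀ u : Rv, (⌊degR E w u⌋ : ℝ) ≤ degR E (fun e => w e + δ * χ e) u ∧
        degR E (fun e => w e + δ * χ e) u ≤ (⌈degR E w u⌉ : ℝ)) ∧
      Phi E (fun e => w e + δ * χ e) < Phi E w := by
  classical
  have hwfrac : ∀ e ∈ fracE E w, 0 < w e ∧ w e < 1 := by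
    intro e he
    simp only [fracE, mem_filter] at he
    obtain ⟨heE, h0, h1⟩ := he
    exact ⟨lt_of_le_of_ne (hw e heE).1 (Ne.symm h0), lt_of_le_of_ne (hw e heE).2 h1⟩
  set σL : L → ℝ := fun v => ∑ e ∈ E.filter (fun e => e.1 = v), χ e with hσLdef
  set σR : Rv → ℝ := fun u => ∑ e ∈ E.filter (fun e => e.2 = u), χ e with hσRdef
  set ebnd : L × Rv → ℝ := fun e => if 0 < χ e then (1 - w e) / χ e else w e / (-χ e)
    with hebnd
  set vbL : L → ℝ := fun v => if 0 < σL v then ((⌈degL E w v⌉ : ℝ) - degL E w v) / σL v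
    else (degL E w v - (⌊degL E w v⌋ : ℝ)) / (-σL v) with hvbL
  set vbR : Rv → ℝ := fun u => if 0 < σR u then ((⌈degR E w u⌉ : ℝ) - degR E w u) / σR u
    else (degR E w u - (⌊degR E w u⌋ : ℝ)) / (-σR u) with hvbR
  set A : Finset (L × Rv) := univ.filter (fun e => χ e ≠ 0) with hA
  set FL : Finset L := univ.filter (fun v => ¬ isInt (degL E w v) ∧ σL v ≠ 0) with hFL
  set FR : Finset Rv := univ.filter (fun u => ¬ isInt (degR E w u) ∧ σR u ≠ 0) with hFR
  set B : Finset ℝ := (A.image ebnd ∪ FL.image vbL) ∪ FR.image vbR with hB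
  have hBne : B.Nonempty := by
    obtain ⟨e0, he0⟩ := hχ
    exact ⟨ebnd e0, mem_union_left _ (mem_union_left _
      (mem_image_of_mem _ (mem_filter.mpr ⟨mem_univ _, he0⟩)))⟩
  have hfloorL : ∀ v : L, ¬ isInt (degL E w v) →
      (⌊degL E w v⌋ : ℝ) < degL E w v ∧ degL E w v < (⌈degL E w v⌉ : ℝ) := by
    intro v hv
    constructor
    · exact lt_of_le_of_ne (Int.floor_le _) (fun h => hv ⟨⌊degL E w v⌋, h.symm⟩)
    · exact lt_of_le_of_ne (Int.le_ceil _) (fun h => hv ⟨⌈degL E w v⌉, h⟩)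
  have hfloorR : ∀ u : Rv, ¬ isInt (degR E w u) →
      (⌊degR E w u⌋ : ℝ) < degR E w u ∧ degR E w u < (⌈degR E w u⌉ : ℝ) := by
    intro u hu
    constructor
    · exact lt_of_le_of_ne (Int.floor_le _) (fun h => hu ⟨⌊degR E w u⌋, h.symm⟩)
    · exact lt_of_le_of_ne (Int.le_ceil _) (fun h => hu ⟨⌈degR E w u⌉, h⟩)
  have hpos : ∀ b ∈ B, 0 < b := by
    intro b hb
    rcases mem_union.mp hb with hb' | hb'
    · rcases mem_union.mp hb' with hb'' | hb''
      · obtain ⟨e, heA, rfl⟩ := mem_image.mp hb''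
        have hχe : χ e ≠ 0 := (mem_filter.mp heA).2
        obtain ⟨h0, h1⟩ := hwfrac e (hsupp e hχe)
        by_cases hc : 0 < χ e
        · rw [hebnd]; simp only [if_pos hc]; exact div_pos (by linarith) hc
        · have hneg : χ e < 0 := lt_of_le_of_ne (not_lt.mp hc) hχe
          rw [hebnd]; simp only [if_neg hc]; exact div_pos (by linarith) (by linarith)
      · obtain ⟨v, hvFL, rfl⟩ := mem_image.mp hb''
        obtain ⟨-, hnint, hσ⟩ := mem_filter.mp hvFL
        obtain ⟨hf, hc⟩ := hfloorL v hnint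
        by_cases hcc : 0 < σL v
        · rw [hvbL]; simp only [if_pos hcc]; exact div_pos (by linarith) hcc
        · have hneg : σL v < 0 := lt_of_le_of_ne (not_lt.mp hcc) hσ
          rw [hvbL]; simp only [if_neg hcc]; exact div_pos (by linarith) (by linarith)
    · obtain ⟨u, huFR, rfl⟩ := mem_image.mp hb'
      obtain ⟨-, hnint, hσ⟩ := mem_filter.mp huFR
      obtain ⟨hf, hc⟩ := hfloorR u hnint
      by_cases hcc : 0 < σR u
      · rw [hvbR]; simp only [if_pos hcc]; exact div_pos (by linarith) hcc
      · have hneg : σR u < 0 := lt_of_le_of_ne (not_lt.mp hcc) hσ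
        rw [hvbR]; simp only [if_neg hcc]; exact div_pos (by linarith) (by linarith)
  set δ : ℝ := B.min' hBne with hδ
  have hδpos : 0 < δ := hpos _ (B.min'_mem hBne)
  have hδle : ∀ b ∈ B, δ ≤ b := fun b hb => Finset.min'_le _ _ hb
  have hedge : ∀ e ∈ E, 0 ≤ w e + δ * χ e ∧ w e + δ * χ e ≤ 1 := by
    intro e he
    by_cases hc0 : χ e = 0
    · rw [hc0]; simpa using hw e he
    · obtain ⟨h0, h1⟩ := hwfrac e (hsupp e hc0)
      have hble : δ ≤ ebnd e := hδle _ (mem_union_left _ (mem_union_left _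
        (mem_image_of_mem _ (mem_filter.mpr ⟨mem_univ _, hc0⟩))))
      by_cases hc : 0 < χ e
      · rw [hebnd] at hble; simp only [if_pos hc] at hble
        have h2 : δ * χ e ≤ 1 - w e := (le_div_iff₀ hc).mp hble
        constructor
        · nlinarith [mul_pos hδpos hc]
        · linarith
      · have hneg : χ e < 0 := lt_of_le_of_ne (not_lt.mp hc) hc0
        rw [hebnd] at hble; simp only [if_neg hc] at hble
        have h2 : δ * (-χ e) ≤ w e := (le_div_iff₀ (by linarith)).mp hble
        constructor
        · linarith
        · nlinarith [mul_pos hδpos (neg_pos.mpr hneg)]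
  have hdegL' : ∀ v : L, degL E (fun e => w e + δ * χ e) v = degL E w v + δ * σL v := by
    intro v
    rw [degL, degL, hσLdef, Finset.sum_add_distrib, Finset.mul_sum]
  have hdegR' : ∀ u : Rv, degR E (fun e => w e + δ * χ e) u = degR E w u + δ * σR u := by
    intro u
    rw [degR, degR, hσRdef, Finset.sum_add_distrib, Finset.mul_sum]
  have hdegLb : ∀ v : L, (⌊degL E w v⌋ : ℝ) ≤ degL E (fun e => w e + δ * χ e) v ∧
      degL E (fun e => w e + δ * χ e) v ≤ (⌈degL E w v⌉ : ℝ) := by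
    intro v
    rw [hdegL' v]
    by_cases hσ : σL v = 0
    · rw [hσ, mul_zero, add_zero]; exact ⟨Int.floor_le _, Int.le_ceil _⟩
    · have hnint : ¬ isInt (degL E w v) := fun h => hσ (hL v h)
      have hble : δ ≤ vbL v := hδle _ (mem_union_left _ (mem_union_right _
        (mem_image_of_mem _ (mem_filter.mpr ⟨mem_univ _, hnint, hσ⟩))))
      obtain ⟨hf, hc⟩ := hfloorL v hnint
      by_cases hcc : 0 < σL v
      · rw [hvbL] at hble; simp only [if_pos hcc] at hble
        have h2 : δ * σL v ≤ (⌈degL E w v⌉ : ℝ) - degL E w v := (le_div_iff₀ hcc).mp hble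
        constructor
        · nlinarith [mul_pos hδpos hcc]
        · linarith
      · have hneg : σL v < 0 := lt_of_le_of_ne (not_lt.mp hcc) hσ
        rw [hvbL] at hble; simp only [if_neg hcc] at hble
        have h2 : δ * (-σL v) ≤ degL E w v - (⌊degL E w v⌋ : ℝ) :=
          (le_div_iff₀ (by linarith)).mp hble
        constructor
        · linarith
        · nlinarith [mul_pos hδpos (neg_pos.mpr hneg)]
  have hdegRb : ∀ u : Rv, (⌊degR E w u⌋ : ℝ) ≤ degR E (fun e => w e + δ * χ e) u ∧
      degR E (fun e => w e + δ * χ e) u ≤ (⌈degR E w u⌉ : ℝ) := by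
    intro u
    rw [hdegR' u]
    by_cases hσ : σR u = 0
    · rw [hσ, mul_zero, add_zero]; exact ⟨Int.floor_le _, Int.le_ceil _⟩
    · have hnint : ¬ isInt (degR E w u) := fun h => hσ (hR u h)
      have hble : δ ≤ vbR u := hδle _ (mem_union_right _
        (mem_image_of_mem _ (mem_filter.mpr ⟨mem_univ _, hnint, hσ⟩)))
      obtain ⟨hf, hc⟩ := hfloorR u hnint
      by_cases hcc : 0 < σR u
      · rw [hvbR] at hble; simp only [if_pos hcc] at hble
        have h2 : δ * σR u ≤ (⌈degR E w u⌉ : ℝ) - degR E w u := (le_div_iff₀ hcc).mp hble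
        constructor
        · nlinarith [mul_pos hδpos hcc]
        · linarith
      · have hneg : σR u < 0 := lt_of_le_of_ne (not_lt.mp hcc) hσ
        rw [hvbR] at hble; simp only [if_neg hcc] at hble
        have h2 : δ * (-σR u) ≤ degR E w u - (⌊degR E w u⌋ : ℝ) :=
          (le_div_iff₀ (by linarith)).mp hble
        constructor
        · linarith
        · nlinarith [mul_pos hδpos (neg_pos.mpr hneg)]
  refine ⟨δ, hδpos, hedge, hdegLb, hdegRb, ?_⟩
  -- monotonicity of the potential pieces
  have hsub1 : fracE E (fun e => w e + δ * χ e) ⊆ fracE E w := by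
    intro e he
    simp only [fracE, mem_filter] at he ⊢
    refine ⟨he.1, ?_⟩
    by_contra h
    have hχ0 : χ e = 0 := by
      by_contra hc
      have := (mem_filter.mp (hsupp e hc)).2
      exact h this
    rw [hχ0, mul_zero, add_zero] at he
    exact h he.2
  have hsubL : freeL E (fun e => w e + δ * χ e) ⊆ freeL E w := by
    intro v hv
    simp only [freeL, mem_filter] at hv ⊢
    refine ⟨mem_univ _, fun hint => hv.2 ?_⟩
    have hz : σL v = 0 := hL v hint
    rw [hdegL' v, hz, mul_zero, add_zero]
    exact hint
  have hsubR : freeR E (fun e => w e + δ * χ e) ⊆ freeR E w := by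
    intro u hu
    simp only [freeR, mem_filter] at hu ⊢
    refine ⟨mem_univ _, fun hint => hu.2 ?_⟩
    have hz : σR u = 0 := hR u hint
    rw [hdegR' u, hz, mul_zero, add_zero]
    exact hint
  have hc1 := Finset.card_le_card hsub1
  have hcL := Finset.card_le_card hsubL
  have hcR := Finset.card_le_card hsubR
  have hδB := B.min'_mem hBne
  rw [← hδ] at hδB
  rcases mem_union.mp hδB with hδm | hδm
  · rcases mem_union.mp hδm with hδm' | hδm'
    · -- an edge becomes integral
      obtain ⟨e0, he0A, heq⟩ := mem_image.mp hδm'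
      have hχe : χ e0 ≠ 0 := (mem_filter.mp he0A).2
      have he0frac : e0 ∈ fracE E w := hsupp e0 hχe
      have he0E : e0 ∈ E := (mem_filter.mp he0frac).1
      have hval : w e0 + δ * χ e0 = 1 ∨ w e0 + δ * χ e0 = 0 := by
        by_cases hc : 0 < χ e0
        · left
          rw [← heq, hebnd]; simp only [if_pos hc]
          field_simp
          ring
        · right
          have hneg : χ e0 < 0 := lt_of_le_of_ne (not_lt.mp hc) hχe
          rw [← heq, hebnd]; simp only [if_neg hc]
          rw [div_mul_eq_mul_div, div_neg, mul_div_assoc, div_self hχe]; ring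
      have hnot : e0 ∉ fracE E (fun e => w e + δ * χ e) := by
        simp only [fracE, mem_filter, not_and]
        intro _ hcon
        rcases hval with h | h
        · exact fun h1 => h1 h
        · exact absurd h hcon
      have : (fracE E (fun e => w e + δ * χ e)).card < (fracE E w).card :=
        Finset.card_lt_card ((Finset.ssubset_iff_of_subset hsub1).mpr ⟨e0, he0frac, hnot⟩)
      simp only [Phi]
      omega
    · -- a left vertex degree becomes integral
      obtain ⟨v0, hv0, heq⟩ := mem_image.mp hδm'
      obtain ⟨-, hnint, hσ⟩ := mem_filter.mp hv0
      have hvfree : v0 ∈ freeL E w := by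
        simp only [freeL, mem_filter]; exact ⟨mem_univ _, hnint⟩
      have hint' : isInt (degL E (fun e => w e + δ * χ e) v0) := by
        rw [hdegL' v0]
        by_cases hcc : 0 < σL v0
        · refine ⟨⌈degL E w v0⌉, ?_⟩
          rw [← heq, hvbL]; simp only [if_pos hcc]
          field_simp
          ring
        · refine ⟨⌊degL E w v0⌋, ?_⟩
          have hneg : σL v0 < 0 := lt_of_le_of_ne (not_lt.mp hcc) hσ
          rw [← heq, hvbL]; simp only [if_neg hcc]
          rw [div_neg, neg_mul, div_mul_cancel₀ _ hσ]; ring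
      have hnot : v0 ∉ freeL E (fun e => w e + δ * χ e) := by
        simp only [freeL, mem_filter, not_and]
        exact fun _ h => h hint'
      have : (freeL E (fun e => w e + δ * χ e)).card < (freeL E w).card :=
        Finset.card_lt_card ((Finset.ssubset_iff_of_subset hsubL).mpr ⟨v0, hvfree, hnot⟩)
      simp only [Phi]
      omega
  · -- a right vertex degree becomes integral
    obtain ⟨u0, hu0, heq⟩ := mem_image.mp hδm
    obtain ⟨-, hnint, hσ⟩ := mem_filter.mp hu0
    have hufree : u0 ∈ freeR E w := by
      simp only [freeR, mem_filter]; exact ⟨mem_univ _, hnint⟩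
    have hint' : isInt (degR E (fun e => w e + δ * χ e) u0) := by
      rw [hdegR' u0]
      by_cases hcc : 0 < σR u0
      · refine ⟨⌈degR E w u0⌉, ?_⟩
        rw [← heq, hvbR]; simp only [if_pos hcc]
        field_simp
        ring
      · refine ⟨⌊degR E w u0⌋, ?_⟩
        have hneg : σR u0 < 0 := lt_of_le_of_ne (not_lt.mp hcc) hσ
        rw [← heq, hvbR]; simp only [if_neg hcc]
        rw [div_neg, neg_mul, div_mul_cancel₀ _ hσ]; ring
    have hnot : u0 ∉ freeR E (fun e => w e + δ * χ e) := by
      simp only [freeR, mem_filter, not_and]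
      exact fun _ h => h hint'
    have : (freeR E (fun e => w e + δ * χ e)).card < (freeR E w).card :=
      Finset.card_lt_card ((Finset.ssubset_iff_of_subset hsubR).mpr ⟨u0, hufree, hnot⟩)
    simp only [Phi]
    omega

lemma base (E : Finset (L × Rv)) (w : L × Rv → ℝ)
    (hw : ∀ e ∈ E, 0 ≤ w e ∧ w e ≤ 1) (hfrac : fracE E w = ∅) :
    ∃ μ : Finset (L × Rv) → ℝ,
      (∀ F, 0 ≤ μ F) ∧
      (∑ F : Finset (L × Rv), μ F = 1) ∧
      (∀ F, μ F ≠ 0 → F ⊆ E) ∧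
      (∀ e ∈ E, ∑ F ∈ Finset.univ.filter (fun F : Finset (L × Rv) => e ∈ F), μ F = w e) ∧
      (∀ F, μ F ≠ 0 →
        (∀ v : L,
          ((F.filter (fun e => e.1 = v)).card : ℤ) = ⌊∑ e ∈ E.filter (fun e => e.1 = v), w e⌋ ∨
          ((F.filter (fun e => e.1 = v)).card : ℤ) = ⌈∑ e ∈ E.filter (fun e => e.1 = v), w e⌉) ∧
        (∀ u : Rv,
          ((F.filter (fun e => e.2 = u)).card : ℤ) = ⌊∑ e ∈ E.filter (fun e => e.2 = u), w e⌋ ∨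
          ((F.filter (fun e => e.2 = u)).card : ℤ) = ⌈∑ e ∈ E.filter (fun e => e.2 = u), w e⌉)) := by
  classical
  have hw01 : ∀ e ∈ E, w e = 0 ∨ w e = 1 := by
    intro e he
    have h : e ∉ fracE E w := by rw [hfrac]; exact notMem_empty e
    simp only [fracE, mem_filter, not_and] at h
    tauto
  set F0 : Finset (L × Rv) := E.filter (fun e => w e = 1) with hF0
  refine ⟨fun F => if F = F0 then 1 else 0, ?_, ?_, ?_, ?_, ?_⟩
  · intro F; dsimp only; split <;> norm_num
  · rw [Finset.sum_ite_eq' Finset.univ F0 (fun _ => (1:ℝ))]; simp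
  · intro F hF
    have : F = F0 := by by_contra h; simp [h] at hF
    subst this; exact filter_subset _ _
  · intro e he
    rw [Finset.sum_ite_eq' _ F0 (fun _ => (1:ℝ))]
    rcases hw01 e he with h | h
    · have : e ∉ F0 := by
        intro hmem
        rw [hF0, mem_filter] at hmem
        rw [h] at hmem; norm_num at hmem
      simp [this, h]
    · have : e ∈ F0 := by rw [hF0, mem_filter]; exact ⟨he, h⟩
      simp [this, h]
  · intro F hF
    have hFeq : F = F0 := by by_contra h; simp [h] at hF
    subst hFeq
    constructor
    · intro v
      left
      have hsq : ∑ e ∈ E.filter (fun e => e.1 = v), w e =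
          (((E.filter (fun e => e.1 = v)).filter (fun e => w e = 1)).card : ℝ) :=
        sum01 _ _ (fun a ha => hw01 a (mem_filter.mp ha).1)
      have hset : F0.filter (fun e => e.1 = v) =
          (E.filter (fun e => e.1 = v)).filter (fun e => w e = 1) := by
        rw [hF0]; ext e; simp; tauto
      rw [hsq, hset, Int.floor_natCast]
    · intro u
      left
      have hsq : ∑ e ∈ E.filter (fun e => e.2 = u), w e =
          (((E.filter (fun e => e.2 = u)).filter (fun e => w e = 1)).card : ℝ) :=
        sum01 _ _ (fun a ha => hw01 a (mem_filter.mp ha).1)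
      have hset : F0.filter (fun e => e.2 = u) =
          (E.filter (fun e => e.2 = u)).filter (fun e => w e = 1) := by
        rw [hF0]; ext e; simp; tauto
      rw [hsq, hset, Int.floor_natCast]

lemma main (n : ℕ) : ∀ (E : Finset (L × Rv)) (w : L × Rv → ℝ), Phi E w ≤ n →
    (∀ e ∈ E, 0 ≤ w e ∧ w e ≤ 1) →
    ∃ μ : Finset (L × Rv) → ℝ,
      (∀ F, 0 ≤ μ F) ∧
      (∑ F : Finset (L × Rv), μ F = 1) ∧
      (∀ F, μ F ≠ 0 → F ⊆ E) ∧
      (∀ e ∈ E, ∑ F ∈ Finset.univ.filter (fun F : Finset (L × Rv) => e ∈ F), μ F = w e) ∧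
      (∀ F, μ F ≠ 0 →
        (∀ v : L,
          ((F.filter (fun e => e.1 = v)).card : ℤ) = ⌊∑ e ∈ E.filter (fun e => e.1 = v), w e⌋ ∨
          ((F.filter (fun e => e.1 = v)).card : ℤ) = ⌈∑ e ∈ E.filter (fun e => e.1 = v), w e⌉) ∧
        (∀ u : Rv,
          ((F.filter (fun e => e.2 = u)).card : ℤ) = ⌊∑ e ∈ E.filter (fun e => e.2 = u), w e⌋ ∨
          ((F.filter (fun e => e.2 = u)).card : ℤ) = ⌈∑ e ∈ E.filter (fun e => e.2 = u), w e⌉)) := by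
  induction n with
  | zero =>
    intro E w hΦ hw
    have hfr : fracE E w = ∅ := by
      have h0 : (fracE E w).card = 0 := by
        have := hΦ; unfold Phi at this; omega
      exact card_eq_zero.mp h0
    exact base E w hw hfr
  | succ n ih =>
    intro E w hΦ hw
    by_cases hfr : fracE E w = ∅
    · exact base E w hw hfr
    · obtain ⟨χ, hχ, hsupp, hL, hR⟩ := exists_kernel E w hw (nonempty_of_ne_empty hfr)
      obtain ⟨δ, hδpos, hedge, hdegLb, hdegRb, hΦ'⟩ := step E w hw χ hχ hsupp hL hR
      have hχm : ∃ e, (fun e => -χ e) e ≠ 0 := by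
        obtain ⟨e, he⟩ := hχ; exact ⟨e, by simpa using he⟩
      have hsuppm : ∀ e, (fun e => -χ e) e ≠ 0 → e ∈ fracE E w := by
        intro e he; exact hsupp e (by simpa using he)
      have hLm : ∀ v : L, isInt (degL E w v) →
          ∑ e ∈ E.filter (fun e => e.1 = v), (fun e => -χ e) e = 0 := by
        intro v hv
        simp only [Finset.sum_neg_distrib, hL v hv, neg_zero]
      have hRm : ∀ u : Rv, isInt (degR E w u) →
          ∑ e ∈ E.filter (fun e => e.2 = u), (fun e => -χ e) e = 0 := by
        intro u hu
        simp only [Finset.sum_neg_distrib, hR u hu, neg_zero]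
      obtain ⟨ε, hεpos, hedgem, hdegLbm, hdegRbm, hΦm⟩ :=
        step E w hw (fun e => -χ e) hχm hsuppm hLm hRm
      obtain ⟨μp, hp1, hp2, hp3, hp4, hp5⟩ :=
        ih E (fun e => w e + δ * χ e) (Nat.lt_succ_iff.mp (lt_of_lt_of_le hΦ' hΦ)) hedge
      obtain ⟨μm, hm1, hm2, hm3, hm4, hm5⟩ :=
        ih E (fun e => w e + ε * (fun e => -χ e) e) (Nat.lt_succ_iff.mp (lt_of_lt_of_le hΦm hΦ)) hedgem
      have hsum : (0:ℝ) < δ + ε := by linarith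
      have hsne : δ + ε ≠ 0 := ne_of_gt hsum
      have ha : (0:ℝ) ≤ ε / (δ + ε) := by positivity
      have hb : (0:ℝ) ≤ δ / (δ + ε) := by positivity
      refine ⟨fun F => ε / (δ + ε) * μp F + δ / (δ + ε) * μm F, ?_, ?_, ?_, ?_, ?_⟩
      · intro F
        exact add_nonneg (mul_nonneg ha (hp1 F)) (mul_nonneg hb (hm1 F))
      · rw [Finset.sum_add_distrib, ← Finset.mul_sum, ← Finset.mul_sum, hp2, hm2,
          mul_one, mul_one]
        field_simp
        ring
      · intro F hF
        by_cases h : μp F = 0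
        · have h2 : μm F ≠ 0 := by
            intro h2; apply hF; simp [h, h2]
          exact hm3 F h2
        · exact hp3 F h
      · intro e he
        rw [Finset.sum_add_distrib, ← Finset.mul_sum, ← Finset.mul_sum,
          hp4 e he, hm4 e he]
        show ε / (δ + ε) * (w e + δ * χ e) + δ / (δ + ε) * (w e + ε * -χ e) = w e
        field_simp
        ring
      · intro F hF
        have hone : μp F ≠ 0 ∨ μm F ≠ 0 := by
          by_contra h
          push_neg at h
          apply hF; simp [h.1, h.2]
        rcases hone with h | h
        · constructor
          · intro v
            exact transfer (hdegLb v).1 (hdegLb v).2 _ ((hp5 F h).1 v)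
          · intro u
            exact transfer (hdegRb u).1 (hdegRb u).2 _ ((hp5 F h).2 u)
        · constructor
          · intro v
            exact transfer (hdegLbm v).1 (hdegLbm v).2 _ ((hm5 F h).1 v)
          · intro u
            exact transfer (hdegRbm u).1 (hdegRbm u).2 _ ((hm5 F h).2 u)

end DepRound

theorem dependent_rounding_bipartite
    (L Rv : Type*) [Fintype L] [Fintype Rv] [DecidableEq L] [DecidableEq Rv]
    (E : Finset (L × Rv)) (w : L × Rv → ℝ)
    (hw : ∀ e ∈ E, 0 ≤ w e ∧ w e ≤ 1) :
    ∃ μ : Finset (L × Rv) → ℝ,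
      (∀ F, 0 ≤ μ F) ∧
      (∑ F : Finset (L × Rv), μ F = 1) ∧
      (∀ F, μ F ≠ 0 → F ⊆ E) ∧
      (∀ e ∈ E, ∑ F ∈ Finset.univ.filter (fun F : Finset (L × Rv) => e ∈ F), μ F = w e) ∧
      (∀ F, μ F ≠ 0 →
        (∀ v : L,
          ((F.filter (fun e => e.1 = v)).card : ℤ) = ⌊∑ e ∈ E.filter (fun e => e.1 = v), w e⌋ ∨
          ((F.filter (fun e => e.1 = v)).card : ℤ) = ⌈∑ e ∈ E.filter (fun e => e.1 = v), w e⌉) ∧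
        (∀ u : Rv,
          ((F.filter (fun e => e.2 = u)).card : ℤ) = ⌊∑ e ∈ E.filter (fun e => e.2 = u), w e⌋ ∨
          ((F.filter (fun e => e.2 = u)).card : ℤ) = ⌈∑ e ∈ E.filter (fun e => e.2 = u), w e⌉)) := by
  exact DepRound.main (DepRound.Phi E w) E w le_rfl hw
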